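/- Let (X,d) be a complete metric space that is strictly ∞-convex and nearly uniformly convex. Then every nonempty closed convex subset C ⊆ X is Chebyshev: for every x ∈ X there is exactly one c ∈ C with d(x,c) = inf_{c' ∈ C} d(x,c'). -/

import Mathlib

open Filter Topology Metric Set MeasureTheory
open scoped ENNReal

section Defs

variable (X : Type) [MetricSpace X]

/-- `m` is a midpoint of `x` and `y`. -/
def IsMidpoint {X : Type} [MetricSpace X] (x y m : X) : Prop :=
  dist x m = dist x y / 2 ∧ dist y m = dist x y / 2

/-- `(X,d)` admits midpoints. -/
def AdmitsMidpoints : Prop := ∀ x y : X, ∃ m, IsMidpoint x y m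

/-- The `p`-mean of two nonnegative reals, `p ∈ [1,∞]`. -/
noncomputable def pMean (p : ℝ≥0∞) (a b : ℝ) : ℝ :=
  if p = ∞ then max a b else ((a ^ p.toReal + b ^ p.toReal) / 2) ^ (1 / p.toReal)

/-- `p`-convexity. -/
def PConvex (p : ℝ≥0∞) : Prop :=
  AdmitsMidpoints X ∧ ∀ x y z m : X, IsMidpoint x y m →
    dist m z ≤ pMean p (dist x z) (dist y z)

/-- strict `p`-convexity. -/
def StrictlyPConvex (p : ℝ≥0∞) : Prop :=
  AdmitsMidpoints X ∧ ∀ x y z m : X, IsMidpoint x y m →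
    (if p = 1 then |dist x z - dist y z| < dist x y else x ≠ y) →
    dist m z < pMean p (dist x z) (dist y z)

/-- uniform `p`-convexity. -/
def UniformlyPConvex (p : ℝ≥0∞) : Prop :=
  AdmitsMidpoints X ∧ ∀ ε : ℝ, 0 < ε → ∃ ρ : ℝ, ρ ∈ Set.Ioo (0:ℝ) 1 ∧
    ∀ x y z m : X, IsMidpoint x y m →
      (if p = 1 then |dist x z - dist y z| + ε * pMean 1 (dist x z) (dist y z) < dist x y
        else ε * pMean p (dist x z) (dist y z) < dist x y) →
      dist m z ≤ (1 - ρ) * pMean p (dist x z) (dist y z)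

/-- Busemann non-positive curvature condition. -/
def Busemann : Prop :=
  AdmitsMidpoints X ∧ ∀ x₀ x₁ y₀ y₁ xm ym : X,
    IsMidpoint x₀ x₁ xm → IsMidpoint y₀ y₁ ym →
      dist xm ym ≤ (dist x₀ y₀ + dist x₁ y₁) / 2

/-- `γ` (restricted to `[0,1]`) is a geodesic from `x` to `y`. -/
def IsGeodesic {X : Type} [MetricSpace X] (γ : ℝ → X) (x y : X) : Prop :=
  γ 0 = x ∧ γ 1 = y ∧ ∀ s ∈ Set.Icc (0:ℝ) 1, ∀ t ∈ Set.Icc (0:ℝ) 1,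
    dist (γ s) (γ t) = |s - t| * dist x y

/-- A subset is (geodesically) convex if it contains all geodesics between its points. -/
def GConvex {X : Type} [MetricSpace X] (C : Set X) : Prop :=
  ∀ x ∈ C, ∀ y ∈ C, ∀ γ : ℝ → X, IsGeodesic γ x y → ∀ t ∈ Set.Icc (0:ℝ) 1, γ t ∈ C

/-- The convex hull: the smallest convex set containing `A`. -/
def gConvexHull {X : Type} [MetricSpace X] (A : Set X) : Set X :=
  ⋂₀ {C : Set X | GConvex C ∧ A ⊆ C}

/-- `∞`-convexity. -/
def InftyConvex : Prop :=
  AdmitsMidpoints X ∧ ∀ x y z m : X, IsMidpoint x y m →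
    dist m z ≤ max (dist x z) (dist y z)

/-- strict `∞`-convexity. -/
def StrictlyInftyConvex : Prop :=
  AdmitsMidpoints X ∧ ∀ x y z m : X, IsMidpoint x y m → x ≠ y →
    dist m z < max (dist x z) (dist y z)

/-- uniform `∞`-convexity. -/
def UniformlyInftyConvex : Prop :=
  AdmitsMidpoints X ∧ ∀ ε : ℝ, 0 < ε → ∃ ρ : ℝ, ρ ∈ Set.Ioo (0:ℝ) 1 ∧
    ∀ x y z m : X, IsMidpoint x y m →
      ε * max (dist x z) (dist y z) < dist x y →
      dist m z ≤ (1 - ρ) * max (dist x z) (dist y z)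

/-- `ρ` works as a modulus of nearly uniform convexity for the parameters `ε`, `R`:
for every infinite `ε`-separated family in a ball of radius `r ≤ R` around `y`, the ball
`B_{(1-ρ)r}(y)` intersects the closed convex hull of the family. -/
def NUCModulus (ε R ρ : ℝ) : Prop :=
  ∀ (ι : Type) [Infinite ι], ∀ (x : ι → X) (y : X) (r : ℝ), r ≤ R →
    (∀ i j : ι, i ≠ j → ε ≤ dist (x i) (x j)) → (∀ i, dist (x i) y ≤ r) →
    (Metric.closedBall y ((1 - ρ) * r) ∩ closure (gConvexHull (Set.range x))).Nonempty

/-- Nearly uniform convexity. -/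
def NearlyUniformlyConvex : Prop :=
  InftyConvex X ∧ ∀ R : ℝ, 0 < R → ∀ ε : ℝ, 0 < ε → ∃ ρ : ℝ, 0 < ρ ∧ NUCModulus X ε R ρ

/-- Reflexivity: every decreasing directed family of nonempty bounded closed convex sets
has nonempty intersection. -/
def MetricReflexive : Prop :=
  ∀ (I : Type) [Nonempty I] [Preorder I] [IsDirected I (· ≤ ·)], ∀ C : I → Set X,
    (∀ i, (C i).Nonempty) → (∀ i, Bornology.IsBounded (C i)) → (∀ i, IsClosed (C i)) →
    (∀ i, GConvex (C i)) → (∀ i j : I, j ≤ i → C i ⊆ C j) → (⋂ i, C i).Nonempty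

/-- The co-convex topology: the weakest topology containing all complements of closed
convex sets. -/
def coConvexTopology : TopologicalSpace X :=
  TopologicalSpace.generateFrom {U : Set X | ∃ C : Set X, IsClosed C ∧ GConvex C ∧ U = Cᶜ}

/-- The set of limit points of the sequence `x` in the co-convex topology. -/
def coLim {X : Type} [MetricSpace X] (x : ℕ → X) : Set X :=
  {a : X | Filter.Tendsto x Filter.atTop (@nhds X (coConvexTopology X) a)}

/-- Countable reflexivity. -/
def CountableReflexive : Prop :=
  MetricReflexive X ∧ ∀ x : ℕ → X, (coLim x).Nonempty →
    ∃ φ : ℕ → ℕ, StrictMono φ ∧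
      coLim x = ⋂ m : ℕ, closure (gConvexHull ((fun n => x (φ n)) '' Set.Ici m))

/-- Quasi-convexity: all sublevel sets are convex. -/
def GQuasiConvex {X : Type} [MetricSpace X] (f : X → ℝ) : Prop :=
  ∀ c : ℝ, GConvex {x : X | f x ≤ c}

/-- Quasi-monotonicity: both quasi-convex and quasi-concave. -/
def GQuasiMonotone {X : Type} [MetricSpace X] (f : X → ℝ) : Prop :=
  GQuasiConvex f ∧ GQuasiConvex (fun x => -f x)

/-- The `p`-mean for real `p ∈ [1,∞)`. -/
noncomputable def pMeanR (p a b : ℝ) : ℝ := ((a ^ p + b ^ p) / 2) ^ (1 / p)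

/-- `p`-convexity for real `p`. -/
def PConvexR (p : ℝ) : Prop :=
  AdmitsMidpoints X ∧ ∀ x y z m : X, IsMidpoint x y m →
    dist m z ≤ pMeanR p (dist x z) (dist y z)

/-- strict `p`-convexity for real `p`. -/
def StrictlyPConvexR (p : ℝ) : Prop :=
  AdmitsMidpoints X ∧ ∀ x y z m : X, IsMidpoint x y m →
    (if p = 1 then |dist x z - dist y z| < dist x y else x ≠ y) →
    dist m z < pMeanR p (dist x z) (dist y z)

/-- uniform `p`-convexity for real `p`. -/
def UniformlyPConvexR (p : ℝ) : Prop :=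
  AdmitsMidpoints X ∧ ∀ ε : ℝ, 0 < ε → ∃ ρ : ℝ, ρ ∈ Set.Ioo (0:ℝ) 1 ∧
    ∀ x y z m : X, IsMidpoint x y m →
      ε * pMeanR p (dist x z) (dist y z) < dist x y →
      dist m z ≤ (1 - ρ) * pMeanR p (dist x z) (dist y z)

/-- `ω(z,(x_n)) = limsup_n d(z,x_n)`. -/
noncomputable def asymRadius {X : Type} [MetricSpace X] (x : ℕ → X) (z : X) : ℝ :=
  Filter.limsup (fun n => dist z (x n)) Filter.atTop

/-- `a` is the (unique) asymptotic center of the sequence `x`. -/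
def IsAsymptoticCenter {X : Type} [MetricSpace X] (x : ℕ → X) (a : X) : Prop :=
  (∀ z : X, asymRadius x a ≤ asymRadius x z) ∧
  ∀ b : X, (∀ z : X, asymRadius x b ≤ asymRadius x z) → b = a

/-- Weak sequential convergence: `a` is the asymptotic center of every subsequence. -/
def WeakSeqConv {X : Type} [MetricSpace X] (x : ℕ → X) (a : X) : Prop :=
  ∀ φ : ℕ → ℕ, StrictMono φ → IsAsymptoticCenter (fun n => x (φ n)) a

end Defs

section Aux

lemma exists_separated_seq {X : Type} [MetricSpace X] (T : Set X) (ε : ℝ)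
    (hT : ∀ s : Finset X, ∃ p ∈ T, ∀ b ∈ s, ε ≤ dist p b) :
    ∃ u : ℕ → X, (∀ n, u n ∈ T) ∧ ∀ i j, i ≠ j → ε ≤ dist (u i) (u j) := by
  classical
  choose pick hpickT hpick using hT
  let F : ℕ → Finset X := fun n => Nat.rec ∅ (fun _ F => insert (pick F) F) n
  have hFsucc : ∀ n, F (n+1) = insert (pick (F n)) (F n) := fun n => rfl
  set u : ℕ → X := fun n => pick (F n) with hu
  have hmono : Monotone F := monotone_nat_of_le_succ fun n => by
    rw [hFsucc]; exact Finset.subset_insert _ _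
  have hmem : ∀ m n, m < n → u m ∈ F n := by
    intro m n h
    have h1 : u m ∈ F (m+1) := by rw [hFsucc]; exact Finset.mem_insert_self _ _
    exact hmono h h1
  refine ⟨u, fun n => hpickT _, ?_⟩
  intro i j hij
  rcases lt_or_gt_of_ne hij with h | h
  · rw [dist_comm]; exact hpick (F j) (u i) (hmem i j h)
  · exact hpick (F i) (u j) (hmem j i h)


section Geod
variable {X : Type} [MetricSpace X]

noncomputable def dyadic (mid : X → X → X) (x y : X) : ℕ → ℕ → X
  | 0, k => if k = 0 then x else y
  | (n+1), k => if k % 2 = 0 then dyadic mid x y n (k / 2)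
      else mid (dyadic mid x y n (k / 2)) (dyadic mid x y n (k / 2 + 1))

variable (mid : X → X → X) (x y : X)

lemma dyadic_zero : ∀ n, dyadic mid x y n 0 = x := by
  intro n; induction n with
  | zero => simp [dyadic]
  | succ n ih => simp [dyadic, ih]

lemma dyadic_top : ∀ n, dyadic mid x y n (2^n) = y := by
  intro n; induction n with
  | zero => simp [dyadic]
  | succ n ih =>
    have h1 : 2^(n+1) % 2 = 0 := by simp [pow_succ, Nat.mul_mod_left]
    have h2 : 2^(n+1) / 2 = 2^n := by rw [pow_succ]; exact Nat.mul_div_cancel _ (by norm_num)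
    simp [dyadic, h1, h2, ih]

lemma dyadic_consistent (n k : ℕ) : dyadic mid x y (n+1) (2*k) = dyadic mid x y n k := by
  have : (2*k) % 2 = 0 := Nat.mul_mod_right 2 k
  simp [dyadic, this, Nat.mul_div_cancel_left k (by norm_num : 0 < 2)]

variable (hmid : ∀ a b, IsMidpoint a b (mid a b))
include hmid

lemma dyadic_adj : ∀ n k, k < 2^n →
    dist (dyadic mid x y n k) (dyadic mid x y n (k+1)) = dist x y / 2^n := by
  intro n
  induction n with
  | zero =>
    intro k hk
    interval_cases k
    simp [dyadic]
  | succ n ih =>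
    intro k hk
    rcases Nat.even_or_odd k with ⟨j, hj⟩ | ⟨j, hj⟩
    · subst hj
      have hp : 2^(n+1) = 2*2^n := by rw [pow_succ]; ring
      have hj2 : j < 2^n := by omega
      have e1 : dyadic mid x y (n+1) (j+j) = dyadic mid x y n j := by
        rw [← two_mul, dyadic_consistent]
      have e2 : dyadic mid x y (n+1) (j+j+1) =
          mid (dyadic mid x y n j) (dyadic mid x y n (j+1)) := by
        have h1 : (j+j+1) % 2 = 1 := by omega
        have h2 : (j+j+1) / 2 = j := by omega
        simp [dyadic, h1, h2]
      rw [e1, e2, (hmid _ _).1, ih j hj2, pow_succ]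
      ring
    · subst hj
      have hp : 2^(n+1) = 2*2^n := by rw [pow_succ]; ring
      have hj2 : j < 2^n := by omega
      have e1 : dyadic mid x y (n+1) (2*j+1) =
          mid (dyadic mid x y n j) (dyadic mid x y n (j+1)) := by
        have h1 : (2*j+1) % 2 = 1 := by omega
        have h2 : (2*j+1) / 2 = j := by omega
        simp [dyadic, h1, h2]
      have e2 : dyadic mid x y (n+1) (2*j+1+1) = dyadic mid x y n (j+1) := by
        have : 2*j+1+1 = 2*(j+1) := by ring
        rw [this, dyadic_consistent]
      rw [e1, e2, dist_comm, (hmid _ _).2, ih j hj2, pow_succ]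
      ring

lemma dyadic_le : ∀ n d k, k + d ≤ 2^n →
    dist (dyadic mid x y n k) (dyadic mid x y n (k+d)) ≤ d * (dist x y / 2^n) := by
  intro n d
  induction d with
  | zero => intro k _; simp
  | succ d ih =>
    intro k hk
    calc dist (dyadic mid x y n k) (dyadic mid x y n (k+(d+1)))
        ≤ dist (dyadic mid x y n k) (dyadic mid x y n (k+d)) +
          dist (dyadic mid x y n (k+d)) (dyadic mid x y n (k+d+1)) := by
          rw [show k+(d+1) = k+d+1 by ring]; exact dist_triangle _ _ _
      _ ≤ d * (dist x y / 2^n) + dist x y / 2^n := by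
          have := ih k (by omega)
          have h2 := dyadic_adj mid x y hmid n (k+d) (by omega)
          rw [h2]; linarith
      _ = (d+1 : ℕ) * (dist x y / 2^n) := by push_cast; ring

lemma dyadic_dist : ∀ n k l, k ≤ l → l ≤ 2^n →
    dist (dyadic mid x y n k) (dyadic mid x y n l) = ((l:ℝ) - k) * (dist x y / 2^n) := by
  intro n k l hkl hl
  have hub := dyadic_le mid x y hmid n (l - k) k (by omega)
  rw [show k + (l - k) = l by omega] at hub
  have hcast : ((l - k : ℕ) : ℝ) = (l:ℝ) - k := by
    push_cast [Nat.cast_sub hkl]; ring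
  rw [hcast] at hub
  -- lower bound
  have h0 : dyadic mid x y n 0 = x := dyadic_zero mid x y n
  have htop : dyadic mid x y n (2^n) = y := dyadic_top mid x y n
  have hD : dist x y = dist (dyadic mid x y n 0) (dyadic mid x y n (2^n)) := by rw [h0, htop]
  have t1 : dist (dyadic mid x y n 0) (dyadic mid x y n (2^n)) ≤
      dist (dyadic mid x y n 0) (dyadic mid x y n k) +
      dist (dyadic mid x y n k) (dyadic mid x y n l) +
      dist (dyadic mid x y n l) (dyadic mid x y n (2^n)) := dist_triangle4 _ _ _ _
  have b1 : dist (dyadic mid x y n 0) (dyadic mid x y n k) ≤ (k:ℝ) * (dist x y / 2^n) := by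
    have := dyadic_le mid x y hmid n k 0 (by omega)
    simpa using this
  have b2 : dist (dyadic mid x y n l) (dyadic mid x y n (2^n)) ≤
      ((2^n - l : ℕ):ℝ) * (dist x y / 2^n) := by
    have := dyadic_le mid x y hmid n (2^n - l) l (by omega)
    rwa [show l + (2^n - l) = 2^n by omega] at this
  have hcast2 : ((2^n - l : ℕ):ℝ) = (2^n : ℝ) - l := by
    push_cast [Nat.cast_sub hl]; ring
  rw [hcast2] at b2
  have hpow : (0:ℝ) < 2^n := by positivity
  have hDval : dist x y = (2^n : ℝ) * (dist x y / 2^n) := by field_simp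
  have hlk : (k:ℝ) ≤ (l:ℝ) := by exact_mod_cast hkl
  have hl2 : (l:ℝ) ≤ (2^n:ℝ) := by exact_mod_cast hl
  nlinarith [dist_nonneg (x := dyadic mid x y n k) (y := dyadic mid x y n l),
    div_nonneg (dist_nonneg (x := x) (y := y)) (le_of_lt hpow)]

lemma dyadic_dist_abs (n k l : ℕ) (hk : k ≤ 2^n) (hl : l ≤ 2^n) :
    dist (dyadic mid x y n k) (dyadic mid x y n l) = |(k:ℝ) - l| * (dist x y / 2^n) := by
  rcases le_total k l with h | h
  · have h' : (0:ℝ) ≤ (l:ℝ) - k := by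
      have : (k:ℝ) ≤ l := by exact_mod_cast h
      linarith
    rw [dyadic_dist mid x y hmid n k l h hl, abs_sub_comm, abs_of_nonneg h']
  · have h' : (0:ℝ) ≤ (k:ℝ) - l := by
      have : (l:ℝ) ≤ k := by exact_mod_cast h
      linarith
    rw [dist_comm, dyadic_dist mid x y hmid n l k h hk, abs_of_nonneg h']

end Geod

section GeodExist
variable {X : Type} [MetricSpace X] [CompleteSpace X]

lemma exists_geodesic (hm : AdmitsMidpoints X) (x y : X) :
    ∃ γ : ℝ → X, IsGeodesic γ x y := by
  classical
  haveI : Nonempty X := ⟨x⟩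
  choose mid hmid using hm
  set D := dist x y with hDdef
  have hD0 : 0 ≤ D := dist_nonneg
  -- index function
  set k : ℝ → ℕ → ℕ := fun t n => ⌊t * 2^n⌋₊ with hk
  set seq : ℝ → ℕ → X := fun t n => dyadic mid x y n (k t n) with hseq
  have hkb : ∀ t ∈ Set.Icc (0:ℝ) 1, ∀ n, k t n ≤ 2^n := by
    intro t ht n
    have : t * 2^n ≤ 2^n := by
      have : (0:ℝ) < 2^n := by positivity
      nlinarith [ht.2]
    calc k t n ≤ ⌊((2^n : ℕ) : ℝ)⌋₊ := Nat.floor_le_floor (by push_cast; linarith)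
      _ = 2^n := Nat.floor_natCast _
  have hfloor2 : ∀ t ∈ Set.Icc (0:ℝ) 1, ∀ n,
      2 * k t n ≤ k t (n+1) ∧ k t (n+1) ≤ 2 * k t n + 1 := by
    intro t ht n
    have h0 : (0:ℝ) ≤ t * 2^n := by
      have : (0:ℝ) ≤ (2:ℝ)^n := by positivity
      nlinarith [ht.1]
    have hf1 : ((k t n : ℕ):ℝ) ≤ t * 2^n := Nat.floor_le h0
    have hf2 : t * 2^n < (k t n : ℕ) + 1 := Nat.lt_floor_add_one _
    have he : t * 2^(n+1) = 2 * (t * 2^n) := by rw [pow_succ]; ring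
    constructor
    · apply Nat.le_floor
      push_cast
      rw [he]
      linarith
    · have : k t (n+1) < 2 * k t n + 2 := by
        rw [hk]
        apply Nat.floor_lt (by rw [he]; linarith) |>.mpr
        rw [he]
        push_cast
        linarith
      omega
  have hstep : ∀ t ∈ Set.Icc (0:ℝ) 1, ∀ n,
      dist (seq t n) (seq t (n+1)) ≤ D * (1/2)^n := by
    intro t ht n
    obtain ⟨hle1, hle2⟩ := hfloor2 t ht n
    have e1 : seq t n = dyadic mid x y (n+1) (2 * k t n) := by
      rw [hseq]; exact (dyadic_consistent mid x y n (k t n)).symm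
    have hub : k t (n+1) ≤ 2^(n+1) := hkb t ht (n+1)
    rw [e1, hseq]
    rw [dyadic_dist_abs mid x y hmid (n+1) (2 * k t n) (k t (n+1))
      (by have := hkb t ht n; have : 2^(n+1) = 2*2^n := by rw [pow_succ]; ring
          omega) hub]
    have habs : |((2 * k t n : ℕ):ℝ) - (k t (n+1) : ℕ)| ≤ 1 := by
      rw [abs_le]
      have c1 : ((2 * k t n : ℕ):ℝ) ≤ (k t (n+1) : ℕ) := by exact_mod_cast hle1
      have c2 : ((k t (n+1) : ℕ):ℝ) ≤ (2 * k t n : ℕ) + 1 := by exact_mod_cast hle2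
      constructor <;> linarith
    have hpos : (0:ℝ) ≤ D / 2^(n+1) := by positivity
    have hh : (0:ℝ) < (2:ℝ)^n := by positivity
    calc |((2 * k t n : ℕ):ℝ) - (k t (n+1) : ℕ)| * (D / 2^(n+1))
        ≤ 1 * (D / 2^(n+1)) := mul_le_mul_of_nonneg_right habs hpos
      _ ≤ D * (1/2)^n := by
          have e : D / 2^(n+1) = D * (1/2)^(n+1) := by
            rw [div_pow, one_pow, mul_one_div]
          rw [one_mul, e]
          exact mul_le_mul_of_nonneg_left
            (pow_le_pow_of_le_one (by norm_num) (by norm_num) (Nat.le_succ n)) hD0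
  have hcauchy : ∀ t ∈ Set.Icc (0:ℝ) 1, CauchySeq (seq t) := by
    intro t ht
    exact cauchySeq_of_le_geometric (1/2) D (by norm_num) (hstep t ht)
  set γ : ℝ → X := fun t => limUnder atTop (seq t) with hγ
  have hT : ∀ t ∈ Set.Icc (0:ℝ) 1, Tendsto (seq t) atTop (𝓝 (γ t)) := by
    intro t ht
    exact (hcauchy t ht).tendsto_limUnder
  -- floor quotient convergence
  have hfq : ∀ t ∈ Set.Icc (0:ℝ) 1,
      Tendsto (fun n => ((k t n : ℕ):ℝ) / 2^n) atTop (𝓝 t) := by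
    intro t ht
    have hb : ∀ n, ‖((k t n : ℕ):ℝ) / 2^n - t‖ ≤ (1/2)^n := by
      intro n
      have h0 : (0:ℝ) ≤ t * 2^n := by
        have : (0:ℝ) ≤ (2:ℝ)^n := by positivity
        nlinarith [ht.1]
      have hf1 : ((k t n : ℕ):ℝ) ≤ t * 2^n := Nat.floor_le h0
      have hf2 : t * 2^n < (k t n : ℕ) + 1 := Nat.lt_floor_add_one _
      have hp : (0:ℝ) < (2:ℝ)^n := by positivity
      have h1 : ((k t n:ℕ):ℝ)/2^n - t ≤ 0 := by
        rw [sub_nonpos, div_le_iff₀ hp]; linarith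
      have h2 : t ≤ (((k t n:ℕ):ℝ)+1)/2^n := by rw [le_div_iff₀ hp]; linarith
      have e2 : (((k t n:ℕ):ℝ)+1)/2^n = ((k t n:ℕ):ℝ)/2^n + 1/2^n := by ring
      have e : (1/2:ℝ)^n = 1/2^n := by rw [div_pow, one_pow]
      rw [Real.norm_eq_abs, abs_le]
      constructor
      · rw [e]; linarith [e2 ▸ h2]
      · linarith [pow_nonneg (by norm_num : (0:ℝ) ≤ 1/2) n]
    have h0 : Tendsto (fun n => ((k t n : ℕ):ℝ) / 2^n - t) atTop (𝓝 0) :=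
      squeeze_zero_norm hb (tendsto_pow_atTop_nhds_zero_of_lt_one (by norm_num) (by norm_num))
    have := h0.add (tendsto_const_nhds (x := t))
    simpa using this
  -- distance formula
  have hdist : ∀ s ∈ Set.Icc (0:ℝ) 1, ∀ t ∈ Set.Icc (0:ℝ) 1,
      dist (γ s) (γ t) = |s - t| * D := by
    intro s hs t ht
    have h1 : Tendsto (fun n => dist (seq s n) (seq t n)) atTop (𝓝 (dist (γ s) (γ t))) :=
      (hT s hs).dist (hT t ht)
    have h2 : ∀ n, dist (seq s n) (seq t n) =
        |((k s n : ℕ):ℝ)/2^n - ((k t n : ℕ):ℝ)/2^n| * D := by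
      intro n
      rw [hseq]
      rw [dyadic_dist_abs mid x y hmid n (k s n) (k t n) (hkb s hs n) (hkb t ht n)]
      have hp : (0:ℝ) < (2:ℝ)^n := by positivity
      rw [div_sub_div_same, abs_div, abs_of_pos hp]
      field_simp
      rw [hDdef]
    have h3 : Tendsto (fun n => |((k s n : ℕ):ℝ)/2^n - ((k t n : ℕ):ℝ)/2^n| * D) atTop
        (𝓝 (|s - t| * D)) := (((hfq s hs).sub (hfq t ht)).abs).mul_const D
    rw [funext h2] at h1
    exact tendsto_nhds_unique h1 h3
  refine ⟨γ, ?_, ?_, hdist⟩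
  · have h0 : (0:ℝ) ∈ Set.Icc (0:ℝ) 1 := by norm_num
    have : ∀ n, seq 0 n = x := by
      intro n
      simp only [hseq]
      have : k (0:ℝ) n = 0 := by simp [hk]
      rw [this]
      exact dyadic_zero mid x y n
    have h1 := hT 0 h0
    rw [funext this] at h1
    exact tendsto_nhds_unique h1 tendsto_const_nhds
  · have h0 : (1:ℝ) ∈ Set.Icc (0:ℝ) 1 := by norm_num
    have : ∀ n, seq 1 n = y := by
      intro n
      simp only [hseq]
      have : k (1:ℝ) n = 2^n := by
        simp only [hk, one_mul]
        rw [show ((2:ℝ)^n) = ((2^n : ℕ):ℝ) by push_cast; ring]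
        exact Nat.floor_natCast _
      rw [this]
      exact dyadic_top mid x y n
    have h1 := hT 1 h0
    rw [funext this] at h1
    exact tendsto_nhds_unique h1 tendsto_const_nhds

end GeodExist

lemma gConvexHull_subset_of {X : Type} [MetricSpace X] {A C : Set X}
    (hC : GConvex C) (hAC : A ⊆ C) : gConvexHull A ⊆ C :=
  Set.sInter_subset_of_mem ⟨hC, hAC⟩


end Aux
/-- In a complete, strictly `∞`-convex, nearly uniformly convex space every
nonempty closed convex set is Chebyshev. -/
theorem closed_convex_chebyshev (X : Type) [MetricSpace X] [CompleteSpace X]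
    (h1 : StrictlyInftyConvex X) (h2 : NearlyUniformlyConvex X)
    (C : Set X) (hne : C.Nonempty) (hcl : IsClosed C) (hconv : GConvex C) (x : X) :
    ∃! c : X, c ∈ C ∧ dist x c = Metric.infDist x C := by
  classical
  obtain ⟨hadm, hstrict⟩ := h1
  set r := Metric.infDist x C with hr
  have hr0 : 0 ≤ r := Metric.infDist_nonneg
  -- existence
  have hex : ∃ c, c ∈ C ∧ dist x c = r := by
    by_cases hx : x ∈ C
    · exact ⟨x, hx, by simp [hr, Metric.infDist_zero_of_mem hx]⟩
    have hrpos : 0 < r := (hcl.notMem_iff_infDist_pos hne).1 hx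
    have hcn : ∀ n : ℕ, ∃ c ∈ C, dist x c < r + 1/(n+1) := by
      intro n
      apply (Metric.infDist_lt_iff hne).mp
      have : (0:ℝ) < 1/(n+1) := by positivity
      linarith
    choose c hcC hcd using hcn
    by_cases htb : TotallyBounded (Set.range c)
    · have hK : IsCompact (closure (Set.range c)) :=
        htb.closure.isCompact_of_isClosed isClosed_closure
      obtain ⟨a, _, φ, hφ, hlim⟩ := hK.tendsto_subseq
        (fun n => subset_closure (Set.mem_range_self n))
      have haC : a ∈ C := by
        have h1 : closure (Set.range c) ⊆ C := by
          apply closure_minimal _ hcl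
          rintro _ ⟨n, rfl⟩; exact hcC n
        exact h1 (hK.isClosed.mem_of_tendsto hlim (Eventually.of_forall
          fun n => subset_closure (Set.mem_range_self _)))
      refine ⟨a, haC, le_antisymm ?_ (Metric.infDist_le_dist_of_mem haC)⟩
      have h1 : Tendsto (fun n => dist x (c (φ n))) atTop (𝓝 (dist x a)) :=
        tendsto_const_nhds.dist hlim
      have h2 : Tendsto (fun n => r + 1/((φ n : ℝ)+1)) atTop (𝓝 (r + 0)) := by
        apply tendsto_const_nhds.add
        exact tendsto_one_div_add_atTop_nhds_zero_nat.comp hφ.tendsto_atTop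
      have := le_of_tendsto_of_tendsto h1 h2
        (Eventually.of_forall fun n => (hcd (φ n)).le)
      simpa using this
    · exfalso
      rw [totallyBounded_iff] at htb
      push_neg at htb
      obtain ⟨ε, hε, hcover⟩ := htb
      obtain ⟨ρ, hρ0, hρ⟩ := h2.2 (r+1) (by linarith) ε hε
      set δ := min 1 (ρ*r/2) with hδdef
      have hδ0 : 0 < δ := lt_min one_pos (by positivity)
      have hδ1 : δ ≤ 1 := min_le_left _ _
      have hδ2 : δ ≤ ρ*r/2 := min_le_right _ _
      obtain ⟨N, hN⟩ := exists_nat_one_div_lt hδ0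
      set T := c '' Set.Ici N with hT
      have hTsep : ∀ s : Finset X, ∃ p ∈ T, ∀ b ∈ s, ε ≤ dist p b := by
        intro s
        have hfin : ((↑s : Set X) ∪ c '' Set.Iio N).Finite :=
          s.finite_toSet.union ((Set.finite_Iio N).image c)
        have := hcover _ hfin
        rw [Set.not_subset] at this
        obtain ⟨q, ⟨m, rfl⟩, hq⟩ := this
        have hmN : N ≤ m := by
          by_contra hlt
          apply hq
          have hqm : c m ∈ (↑s ∪ c '' Set.Iio N : Set X) :=
            Set.mem_union_right _ ⟨m, Set.mem_Iio.mpr (by omega), rfl⟩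
          exact Set.mem_biUnion hqm (Metric.mem_ball_self hε)
        refine ⟨c m, ⟨m, hmN, rfl⟩, fun b hb => ?_⟩
        by_contra hlt
        push_neg at hlt
        exact hq (Set.mem_biUnion (Set.mem_union_left _ hb) (by
          rwa [Metric.mem_ball]))
      obtain ⟨u, huT, husep⟩ := exists_separated_seq T ε hTsep
      have hub : ∀ i, dist (u i) x ≤ r + δ := by
        intro i
        obtain ⟨m, hm, he⟩ := huT i
        have h1 : dist x (c m) < r + 1/(m+1) := hcd m
        have h2 : (1:ℝ)/(m+1) ≤ 1/(N+1) := by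
          apply one_div_le_one_div_of_le (by positivity)
          have : (N:ℝ) ≤ m := by exact_mod_cast hm
          linarith
        rw [← he, dist_comm]
        linarith [hN.le]
      obtain ⟨z, hz1, hz2⟩ := hρ ℕ u x (r+δ) (by linarith) husep hub
      have hzC : z ∈ C := by
        have h1 : gConvexHull (Set.range u) ⊆ C := by
          apply gConvexHull_subset_of hconv
          rintro _ ⟨i, rfl⟩
          obtain ⟨m, _, he⟩ := huT i
          rw [← he]; exact hcC m
        have h2 : closure (gConvexHull (Set.range u)) ⊆ C := closure_minimal h1 hcl
        exact h2 hz2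
      have hd1 : dist z x ≤ (1-ρ)*(r+δ) := Metric.mem_closedBall.mp hz1
      have hd2 : (1-ρ)*(r+δ) < r := by nlinarith
      have hd3 : r ≤ dist x z := Metric.infDist_le_dist_of_mem hzC
      rw [dist_comm] at hd1
      linarith
  -- uniqueness
  obtain ⟨c₀, hc₀C, hc₀d⟩ := hex
  refine ⟨c₀, ⟨hc₀C, hc₀d⟩, ?_⟩
  rintro c₁ ⟨hc₁C, hc₁d⟩
  by_contra hnc
  obtain ⟨γ, hγ0, hγ1, hγd⟩ := exists_geodesic hadm c₁ c₀
  have h01 : (0:ℝ) ∈ Set.Icc (0:ℝ) 1 := by norm_num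
  have h11 : (1:ℝ) ∈ Set.Icc (0:ℝ) 1 := by norm_num
  have hh1 : (1/2:ℝ) ∈ Set.Icc (0:ℝ) 1 := by norm_num
  have hmemC : γ (1/2) ∈ C :=
    hconv c₁ hc₁C c₀ hc₀C γ ⟨hγ0, hγ1, hγd⟩ (1/2) hh1
  have hmid : IsMidpoint c₁ c₀ (γ (1/2)) := by
    constructor
    · have := hγd 0 h01 (1/2) hh1
      rw [hγ0] at this
      rw [this, show |(0:ℝ) - 1/2| = 1/2 by rw [abs_of_nonpos] <;> norm_num]
      ring
    · have := hγd 1 h11 (1/2) hh1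
      rw [hγ1] at this
      rw [this, show |(1:ℝ) - 1/2| = 1/2 by rw [abs_of_nonneg] <;> norm_num]
      ring
  have hlt := hstrict c₁ c₀ x (γ (1/2)) hmid hnc
  rw [dist_comm c₁ x, dist_comm c₀ x, hc₁d, hc₀d, max_self] at hlt
  have h1 : r ≤ dist x (γ (1/2)) := Metric.infDist_le_dist_of_mem hmemC
  rw [dist_comm] at h1
  linarith
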